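/- Let E = H¹(𝕋_L, ℂ) and suppose 0 < 2λα² < β(2π/L)². Define Q(V) = ∫₀^L β|∂_x V|² - 2λα² (Re V)² dx. Then Q(V) ≥ c_λ ‖V‖²_{H¹} for all V ∈ E satisfying both ∫₀^L Re V dx = 0 and ∫₀^L Im V dx = 0, where c_λ = (β(2π/L)² - 2λα²)/(1 + (2π/L)²) > 0. -/

import Mathlib

open MeasureTheory

section WirtingerAux

open Complex ContinuousMap AddCircle

variable {L : ℝ}

private lemma periodic_deriv_of_periodic {f : ℝ → ℂ} (hper : Function.Periodic f L) :
    Function.Periodic (deriv f) L := by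
  intro x
  have h : deriv (fun y => f (y + L)) x = deriv f x := by
    congr 1
    exact funext hper
  rw [← h, deriv_comp_add_const]

private lemma lift_eq_liftIoc [hL : Fact (0 < L)] {f : ℝ → ℂ} (hper : Function.Periodic f L) :
    liftIoc L 0 f = hper.lift := by
  funext z
  induction z using QuotientAddGroup.induction_on with
  | H x =>
    rw [Function.Periodic.lift_coe]
    set y : ℝ := ((equivIoc L 0 (x : AddCircle L)) : ℝ) with hy
    have h1 : ((y : ℝ) : AddCircle L) = (x : AddCircle L) := by
      rw [hy]
      exact (equivIoc L 0).symm_apply_apply _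
    obtain ⟨k, hk⟩ : ∃ k : ℤ, k • L = -y + x := QuotientAddGroup.eq.mp h1
    have hx : x = y + k • L := by
      have := zsmul_eq_mul L k
      linarith [hk, this]
    have h2 : liftIoc L 0 f ↑x = f y := rfl
    rw [h2, hx, (hper.zsmul k) y]

private lemma parseval_cont [hL : Fact (0 < L)] (G : C(AddCircle L, ℂ)) :
    ∑' n : ℤ, ‖fourierCoeff ⇑G n‖ ^ 2 = (∫ x in (0:ℝ)..L, ‖G (x : AddCircle L)‖ ^ 2) / L := by
  have h1 := tsum_sq_fourierCoeff (toLp (E := ℂ) 2 haarAddCircle ℂ G)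
  simp_rw [fourierCoeff_toLp] at h1
  have h2 : ∫ t, ‖(toLp (E := ℂ) 2 haarAddCircle ℂ G) t‖ ^ 2 ∂haarAddCircle
      = ∫ t, ‖G t‖ ^ 2 ∂haarAddCircle := by
    refine integral_congr_ae ?_
    filter_upwards [coeFn_toLp (𝕜 := ℂ) (p := 2) haarAddCircle G] with t ht
    rw [ht]
  have h3 : (∫ x in (0:ℝ)..(0 + L), ‖G (x : AddCircle L)‖ ^ 2)
      = ∫ t : AddCircle L, ‖G t‖ ^ 2 ∂volume :=
    AddCircle.intervalIntegral_preimage L 0 (fun t => ‖G t‖ ^ 2)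
  rw [volume_eq_smul_haarAddCircle, integral_smul_measure,
    ENNReal.toReal_ofReal hL.out.le, zero_add] at h3
  rw [h1, h2, h3, smul_eq_mul, mul_div_cancel_left₀ _ hL.out.ne']

private lemma summable_sq_fourierCoeff [hL : Fact (0 < L)] (G : C(AddCircle L, ℂ)) :
    Summable fun n : ℤ => ‖fourierCoeff ⇑G n‖ ^ 2 := by
  have h := (lp.memℓp (fourierBasis.repr (toLp (E := ℂ) 2 haarAddCircle ℂ G))).summable
    (p := 2) (by norm_num)
  simp_rw [fourierBasis_repr, fourierCoeff_toLp] at h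
  have h2 : ∀ n : ℤ, ‖fourierCoeff ⇑G n‖ ^ ((2:ENNReal).toReal) = ‖fourierCoeff ⇑G n‖ ^ 2 := by
    intro n
    norm_num [Real.rpow_natCast]
  simpa only [h2] using h

/-- Wirtinger / Poincaré inequality for zero-mean periodic `C¹` functions. -/
private lemma wirtinger (hL : 0 < L) {f : ℝ → ℂ} (hf : ContDiff ℝ 1 f)
    (hper : Function.Periodic f L) (hmean : (∫ x in (0:ℝ)..L, f x) = 0) :
    (2 * Real.pi / L) ^ 2 * ∫ x in (0:ℝ)..L, ‖f x‖ ^ 2 ≤ ∫ x in (0:ℝ)..L, ‖deriv f x‖ ^ 2 := by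
  haveI : Fact (0 < L) := ⟨hL⟩
  have hperD := periodic_deriv_of_periodic hper
  have hcontD : Continuous (deriv f) := hf.continuous_deriv le_rfl
  set F : C(AddCircle L, ℂ) := ⟨hper.lift, continuous_coinduced_dom.mpr hf.continuous⟩ with hF
  set F' : C(AddCircle L, ℂ) := ⟨hperD.lift, continuous_coinduced_dom.mpr hcontD⟩ with hF'
  -- zero-th coefficient vanishes
  have hc0 : fourierCoeff ⇑F 0 = 0 := by
    rw [fourierCoeff_eq_intervalIntegral _ 0 0]
    simp only [neg_zero, fourier_zero, one_smul, zero_add]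
    have : (∫ x in (0:ℝ)..L, F (x : AddCircle L)) = ∫ x in (0:ℝ)..L, f x := by
      refine intervalIntegral.integral_congr fun x _ => ?_
      exact hper.lift_coe x
    rw [this, hmean, smul_zero]
  -- relation between coefficients
  have hab : (0:ℝ) < 0 + L := lt_add_of_pos_right 0 hL
  have hCF : ∀ n : ℤ, fourierCoeff ⇑F n = fourierCoeffOn hab f n := by
    intro n
    have : ⇑F = liftIoc L 0 f := (lift_eq_liftIoc hper).symm
    rw [this]
    exact fourierCoeff_liftIoc_eq f n
  have hCF' : ∀ n : ℤ, fourierCoeff ⇑F' n = fourierCoeffOn hab (deriv f) n := by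
    intro n
    have : ⇑F' = liftIoc L 0 (deriv f) := (lift_eq_liftIoc hperD).symm
    rw [this]
    exact fourierCoeff_liftIoc_eq (deriv f) n
  have hrel : ∀ n : ℤ, n ≠ 0 →
      ‖fourierCoeff ⇑F n‖ ≤ L / (2 * Real.pi) * ‖fourierCoeff ⇑F' n‖ := by
    intro n hn
    have hder : ∀ x ∈ Set.uIcc (0:ℝ) (0 + L), HasDerivAt f (deriv f x) x := fun x _ =>
      (hf.differentiable one_ne_zero x).hasDerivAt
    have hint : IntervalIntegrable (deriv f) volume 0 (0 + L) :=
      hcontD.intervalIntegrable _ _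
    have key := fourierCoeffOn_of_hasDerivAt hab hn hder hint
    have hfL : f (0 + L) - f 0 = 0 := by
      rw [zero_add]
      have := hper 0
      rw [zero_add] at this
      rw [this, sub_self]
    rw [hfL, mul_zero, zero_sub] at key
    rw [hCF n, hCF' n, key, norm_mul, norm_neg, norm_mul]
    have hpi : (0:ℝ) < Real.pi := Real.pi_pos
    have habs : (1:ℝ) ≤ |(n:ℝ)| := by
      rw [← Int.cast_abs]
      exact_mod_cast Int.one_le_abs hn
    have habs0 : (0:ℝ) < |(n:ℝ)| := lt_of_lt_of_le one_pos habs
    have h2pi : ‖(1 : ℂ) / (-2 * Real.pi * I * n)‖ = 1 / (2 * Real.pi * |(n:ℝ)|) := by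
      rw [norm_div, norm_one]
      rw [show (-2 * (Real.pi:ℂ) * I * n) = ((-(2 * Real.pi)) : ℝ) * (I * n) by push_cast; ring]
      rw [norm_mul, norm_mul, Complex.norm_real, Complex.norm_I, one_mul, Complex.norm_intCast]
      rw [Real.norm_eq_abs, abs_neg, abs_of_pos (by linarith)]
    have hcast : (((0:ℝ) + L : ℝ) : ℂ) - ((0:ℝ) : ℂ) = ((L : ℝ) : ℂ) := by push_cast; ring
    have hnorm : ‖(((0:ℝ) + L : ℝ) : ℂ) - ((0:ℝ) : ℂ)‖ = L := by
      rw [hcast, Complex.norm_real, Real.norm_eq_abs, abs_of_pos hL]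
    rw [h2pi, hnorm]
    have step : 1 / (2 * Real.pi * |(n:ℝ)|) ≤ 1 / (2 * Real.pi) := by
      apply one_div_le_one_div_of_le (by positivity)
      nlinarith [habs, hpi]
    calc 1 / (2 * Real.pi * |(n:ℝ)|) * (L * ‖fourierCoeffOn hab (deriv f) n‖)
        ≤ 1 / (2 * Real.pi) * (L * ‖fourierCoeffOn hab (deriv f) n‖) :=
          mul_le_mul_of_nonneg_right step (by positivity)
      _ = L / (2 * Real.pi) * ‖fourierCoeffOn hab (deriv f) n‖ := by ring
  -- Parseval on both sides
  have hPar : ∑' n : ℤ, ‖fourierCoeff ⇑F n‖ ^ 2 = (∫ x in (0:ℝ)..L, ‖f x‖ ^ 2) / L := by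
    rw [parseval_cont F]
    simp only [hF, ContinuousMap.coe_mk, Function.Periodic.lift_coe]
  have hPar' : ∑' n : ℤ, ‖fourierCoeff ⇑F' n‖ ^ 2
      = (∫ x in (0:ℝ)..L, ‖deriv f x‖ ^ 2) / L := by
    rw [parseval_cont F']
    simp only [hF', ContinuousMap.coe_mk, Function.Periodic.lift_coe]
  -- compare the sums
  have hterm : ∀ n : ℤ, ‖fourierCoeff ⇑F n‖ ^ 2
      ≤ (L / (2 * Real.pi)) ^ 2 * ‖fourierCoeff ⇑F' n‖ ^ 2 := by
    intro n
    rcases eq_or_ne n 0 with rfl | hn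
    · rw [hc0]
      norm_num
      positivity
    · have := hrel n hn
      have h0 : (0:ℝ) ≤ ‖fourierCoeff ⇑F n‖ := norm_nonneg _
      nlinarith [norm_nonneg (fourierCoeff ⇑F' n), Real.pi_pos]
  have hsum' := summable_sq_fourierCoeff F'
  have hsum'' : Summable fun n : ℤ => (L / (2 * Real.pi)) ^ 2 * ‖fourierCoeff ⇑F' n‖ ^ 2 :=
    hsum'.mul_left _
  have hts : ∑' n : ℤ, ‖fourierCoeff ⇑F n‖ ^ 2
      ≤ ∑' n : ℤ, (L / (2 * Real.pi)) ^ 2 * ‖fourierCoeff ⇑F' n‖ ^ 2 :=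
    Summable.tsum_le_tsum hterm (summable_sq_fourierCoeff F) hsum''
  rw [tsum_mul_left, hPar, hPar'] at hts
  have hpi : (0:ℝ) < Real.pi := Real.pi_pos
  have hKey : (∫ x in (0:ℝ)..L, ‖f x‖ ^ 2)
      ≤ (L / (2 * Real.pi)) ^ 2 * ∫ x in (0:ℝ)..L, ‖deriv f x‖ ^ 2 := by
    have h := mul_le_mul_of_nonneg_right hts hL.le
    rw [div_mul_cancel₀ _ hL.ne', mul_assoc, div_mul_cancel₀ _ hL.ne'] at h
    exact h
  have hfac : (2 * Real.pi / L) ^ 2 * (L / (2 * Real.pi)) ^ 2 = 1 := by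
    field_simp
  calc (2 * Real.pi / L) ^ 2 * ∫ x in (0:ℝ)..L, ‖f x‖ ^ 2
      ≤ (2 * Real.pi / L) ^ 2 * ((L / (2 * Real.pi)) ^ 2 * ∫ x in (0:ℝ)..L, ‖deriv f x‖ ^ 2) :=
        mul_le_mul_of_nonneg_left hKey (by positivity)
    _ = ∫ x in (0:ℝ)..L, ‖deriv f x‖ ^ 2 := by
        rw [← mul_assoc, hfac, one_mul]

end WirtingerAux

/-- Coercivity of the Hessian of the Lyapunov function at a plane wave of the cubic NLS
on the torus of length `L`, focusing case `0 < 2λα² < β(2π/L)²`: for `V` (`L`-periodic,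
`C¹`) with zero-mean real and imaginary parts,
`Q(V) = ∫₀^L β|∂ₓV|² - 2λα²(Re V)² ≥ c_λ ‖V‖²_{H¹}` with
`c_λ = (β(2π/L)² - 2λα²)/(1+(2π/L)²)`. -/
theorem stmt18 (L β lam α : ℝ) (hL : 0 < L) (hβ : 0 < β)
    (h1 : 0 < 2 * lam * α ^ 2) (h2 : 2 * lam * α ^ 2 < β * (2 * Real.pi / L) ^ 2)
    (V : ℝ → ℂ) (hV : ContDiff ℝ 1 V) (hper : Function.Periodic V L)
    (hmeanRe : (∫ x in (0:ℝ)..L, (V x).re) = 0)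
    (hmeanIm : (∫ x in (0:ℝ)..L, (V x).im) = 0) :
    (β * (2 * Real.pi / L) ^ 2 - 2 * lam * α ^ 2) / (1 + (2 * Real.pi / L) ^ 2) *
        (∫ x in (0:ℝ)..L, (‖deriv V x‖ ^ 2 + ‖V x‖ ^ 2))
      ≤ ∫ x in (0:ℝ)..L, (β * ‖deriv V x‖ ^ 2 - 2 * lam * α ^ 2 * (V x).re ^ 2) := by
  have hpi : (0:ℝ) < Real.pi := Real.pi_pos
  have hcV : Continuous V := hV.continuous
  have hcD : Continuous (deriv V) := hV.continuous_deriv le_rfl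
  have hiA : IntervalIntegrable (fun x => ‖deriv V x‖ ^ 2) volume 0 L :=
    ((hcD.norm.pow 2).intervalIntegrable _ _)
  have hiB : IntervalIntegrable (fun x => ‖V x‖ ^ 2) volume 0 L :=
    ((hcV.norm.pow 2).intervalIntegrable _ _)
  have hiR : IntervalIntegrable (fun x => (V x).re ^ 2) volume 0 L :=
    (((Complex.continuous_re.comp hcV).pow 2).intervalIntegrable _ _)
  set K : ℝ := (2 * Real.pi / L) ^ 2 with hK
  have hK0 : 0 < K := by positivity
  set A : ℝ := ∫ x in (0:ℝ)..L, ‖deriv V x‖ ^ 2 with hA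
  set B : ℝ := ∫ x in (0:ℝ)..L, ‖V x‖ ^ 2 with hB
  set R : ℝ := ∫ x in (0:ℝ)..L, (V x).re ^ 2 with hR
  have hmean : (∫ x in (0:ℝ)..L, V x) = 0 := by
    have h : Set.EqOn V (fun x => ((V x).re : ℂ) + ((V x).im : ℂ) * Complex.I)
        (Set.uIcc 0 L) := fun x _ => (Complex.re_add_im (V x)).symm
    have hc1 : Continuous fun x : ℝ => ((V x).re : ℂ) := by fun_prop
    have hc2 : Continuous fun x : ℝ => ((V x).im : ℂ) * Complex.I := by fun_prop
    rw [intervalIntegral.integral_congr h,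
      intervalIntegral.integral_add (hc1.intervalIntegrable _ _) (hc2.intervalIntegrable _ _),
      intervalIntegral.integral_mul_const, intervalIntegral.integral_ofReal,
      intervalIntegral.integral_ofReal, hmeanRe, hmeanIm]
    simp
  have hW : K * B ≤ A := wirtinger hL hV hper hmean
  have hRB : R ≤ B := by
    refine intervalIntegral.integral_mono_on hL.le hiR hiB fun x _ => ?_
    have hx : ‖V x‖ ^ 2 = (V x).re ^ 2 + (V x).im ^ 2 := by
      rw [Complex.sq_norm, Complex.normSq_apply]
      ring
    nlinarith [sq_nonneg ((V x).im), hx]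
  have hR0 : (0:ℝ) ≤ R := intervalIntegral.integral_nonneg hL.le fun x _ => sq_nonneg _
  have hB0 : (0:ℝ) ≤ B := intervalIntegral.integral_nonneg hL.le fun x _ => sq_nonneg _
  have hsplit : (∫ x in (0:ℝ)..L, (‖deriv V x‖ ^ 2 + ‖V x‖ ^ 2)) = A + B :=
    intervalIntegral.integral_add hiA hiB
  have hrhs : (∫ x in (0:ℝ)..L, (β * ‖deriv V x‖ ^ 2 - 2 * lam * α ^ 2 * (V x).re ^ 2))
      = β * A - 2 * lam * α ^ 2 * R := by
    rw [intervalIntegral.integral_sub (hiA.const_mul β) (hiR.const_mul _),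
      intervalIntegral.integral_const_mul, intervalIntegral.integral_const_mul]
  rw [hsplit, hrhs]
  have hmul : (β + 2 * lam * α ^ 2) * (K * B) ≤ (β + 2 * lam * α ^ 2) * A :=
    mul_le_mul_of_nonneg_left hW (by linarith)
  have key1 : (β * K - 2 * lam * α ^ 2) * (A + B) ≤ (β * A - 2 * lam * α ^ 2 * B) * (1 + K) := by
    nlinarith [hmul]
  have key2 : (β * K - 2 * lam * α ^ 2) / (1 + K) * (A + B) ≤ β * A - 2 * lam * α ^ 2 * B := by
    rw [div_mul_eq_mul_div, div_le_iff₀ (by positivity : (0:ℝ) < 1 + K)]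
    exact key1
  have key3 : β * A - 2 * lam * α ^ 2 * B ≤ β * A - 2 * lam * α ^ 2 * R := by
    nlinarith [hRB, h1]
  linarith [key2, key3]
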